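/- arXiv:2512.14318 — 2 statements merged into one kernel-verified Lean document; each statement's English description precedes it below -/
import Mathlib

section
/- For every natural number q ≥ 1, the iterated integral α_q := ∫_1^2 ⋯ ∫_1^2 (1 + s_1 + ⋯ + s_q)^{-(q+1)} ds_1 ⋯ ds_q equals q!/(2q+1)!. -/
open MeasureTheory


noncomputable abbrev muI : Measure ℝ := (volume : Measure ℝ).restrict (Set.Icc 1 2)

instance : IsProbabilityMeasure muI :=
  ⟨by simp [muI, Real.volume_Icc]; norm_num⟩

lemma pi_restrict_Icc (q : ℕ) :
    (Measure.pi fun _ : Fin q => muI) =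
      (volume : Measure (Fin q → ℝ)).restrict (Set.univ.pi fun _ => Set.Icc (1 : ℝ) 2) := by
  rw [show (volume : Measure (Fin q → ℝ)) = Measure.pi fun _ => (volume : Measure ℝ) from
    volume_pi]
  refine Measure.pi_eq (μ := fun _ : Fin q => muI) fun s hs => ?_
  rw [Measure.restrict_apply (MeasurableSet.univ_pi hs), ← Set.pi_inter_distrib,
    Measure.pi_pi]
  simp [muI, Measure.restrict_apply (hs _)]

lemma prod_shift (n m : ℕ) : n.factorial * ∏ j ∈ Finset.range m, (n + 1 + j) = (n + m).factorial := by
  induction m with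
  | zero => simp
  | succ m ih =>
    rw [Finset.prod_range_succ, ← mul_assoc, ih]
    rw [show n + (m + 1) = (n + m) + 1 from rfl, Nat.factorial_succ]
    ring

lemma inner_int (m : ℕ) (d : ℝ) (hd : 0 < d) :
    ∫ x, ((x + d) ^ (m + 2))⁻¹ ∂muI =
      (((1 + d) ^ (m + 1))⁻¹ - ((2 + d) ^ (m + 1))⁻¹) / (m + 1) := by
  have h12 : (1 : ℝ) ≤ 2 := one_le_two
  have : ∫ x, ((x + d) ^ (m + 2))⁻¹ ∂muI = ∫ x in (1:ℝ)..2, ((x + d) ^ (m + 2))⁻¹ := by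
    rw [intervalIntegral.integral_of_le h12, muI, integral_Icc_eq_integral_Ioc]
  rw [this]
  have hz : ∀ x ∈ Set.uIcc (1:ℝ) 2, ((x + d) ^ (m + 2))⁻¹ = (x + d) ^ (-((m + 2 : ℕ) : ℤ)) := by
    intro x hx
    rw [zpow_neg, zpow_natCast]
  calc ∫ x in (1:ℝ)..2, ((x + d) ^ (m + 2))⁻¹
      = ∫ x in (1:ℝ)..2, (x + d) ^ (-((m + 2 : ℕ) : ℤ)) := by
        refine intervalIntegral.integral_congr fun x hx => ?_
        rw [zpow_neg, zpow_natCast]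
    _ = ∫ x in (1 + d)..(2 + d), x ^ (-((m + 2 : ℕ) : ℤ)) := by
        rw [intervalIntegral.integral_comp_add_right (fun x => x ^ (-((m + 2 : ℕ) : ℤ))) d]
    _ = (((1 + d) ^ (m + 1))⁻¹ - ((2 + d) ^ (m + 1))⁻¹) / (m + 1) := by
        have h1 : (0:ℝ) < 1 + d := by linarith
        have h2 : (0:ℝ) < 2 + d := by linarith
        rw [integral_zpow (by
          right
          refine ⟨by intro hcon; omega, ?_⟩
          rw [Set.uIcc_of_le (by linarith)]
          intro h
          have := h.1
          linarith)]
        rw [show (-((m + 2 : ℕ) : ℤ)) + 1 = -((m + 1 : ℕ) : ℤ) by push_cast; ring]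
        rw [zpow_neg, zpow_neg, zpow_natCast, zpow_natCast]
        have e1 : ((1 + d) ^ (m + 1) : ℝ) ≠ 0 := by positivity
        have e2 : ((2 + d) ^ (m + 1) : ℝ) ≠ 0 := by positivity
        push_cast
        rw [show (-((m:ℝ) + 2) + 1 : ℝ) = -((m:ℝ) + 1) by ring, div_neg, ← neg_div]
        ring

lemma integrable_aux (q m : ℕ) (c : ℝ) (hc : 0 < c) :
    Integrable (fun y : Fin q → ℝ => ((c + ∑ j, y j) ^ m)⁻¹)
      (Measure.pi fun _ : Fin q => muI) := by
  have hmeas : Measurable fun y : Fin q → ℝ => ((c + ∑ j, y j) ^ m)⁻¹ := by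
    fun_prop
  refine Integrable.mono' (integrable_const ((c ^ m)⁻¹)) hmeas.aestronglyMeasurable ?_
  have hae : ∀ᵐ y ∂(Measure.pi fun _ : Fin q => muI),
      y ∈ Set.univ.pi fun _ : Fin q => Set.Icc (1 : ℝ) 2 := by
    rw [pi_restrict_Icc q]
    exact ae_restrict_mem (MeasurableSet.univ_pi fun _ => measurableSet_Icc)
  filter_upwards [hae] with y hy
  have hsum : 0 ≤ ∑ j, y j := Finset.sum_nonneg fun j _ => by
    have := (hy j (Set.mem_univ j)).1; linarith
  have hbase : c ≤ c + ∑ j, y j := by linarith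
  have hpos : 0 < c + ∑ j, y j := by linarith
  rw [Real.norm_eq_abs, abs_of_nonneg (by positivity)]
  exact inv_anti₀ (by positivity) (pow_le_pow_left₀ hc.le hbase m)


lemma key (q : ℕ) : ∀ c : ℝ, 0 < c →
    (∫ s : Fin q → ℝ, ((c + ∑ i, s i) ^ (q + 1))⁻¹ ∂(Measure.pi fun _ : Fin q => muI)) =
      (∏ j ∈ Finset.range (q + 1), (c + q + j))⁻¹ := by
  induction q with
  | zero =>
    intro c hc
    simp
  | succ q ih =>
    intro c hc
    have hmp := (measurePreserving_piFinSuccAbove (fun _ : Fin (q + 1) => muI) 0).symm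
    rw [← hmp.integral_comp']
    simp_rw [MeasurableEquiv.piFinSuccAbove_symm_apply, Fin.insertNthEquiv,
      Equiv.coe_fn_mk, Fin.insertNth_zero, Fin.sum_cons, cast_eq]
    set ν := Measure.pi fun _ : Fin q => muI with hν
    have hmeas : Measurable fun z : ℝ × (Fin q → ℝ) =>
        ((c + (z.1 + ∑ j, z.2 j)) ^ (q + 1 + 1))⁻¹ := by fun_prop
    have haex : ∀ᵐ x ∂muI, x ∈ Set.Icc (1 : ℝ) 2 := ae_restrict_mem measurableSet_Icc
    have haey : ∀ᵐ y ∂ν, y ∈ Set.univ.pi fun _ : Fin q => Set.Icc (1 : ℝ) 2 := by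
      rw [hν, pi_restrict_Icc q]
      exact ae_restrict_mem (MeasurableSet.univ_pi fun _ => measurableSet_Icc)
    have hae : ∀ᵐ z ∂(muI.prod ν), z.1 ∈ Set.Icc (1 : ℝ) 2 ∧
        (z.2 ∈ Set.univ.pi fun _ : Fin q => Set.Icc (1 : ℝ) 2) := by
      rw [Measure.ae_prod_iff_ae_ae]
      · filter_upwards [haex] with x hx
        filter_upwards [haey] with y hy
        exact ⟨hx, hy⟩
      · exact (measurableSet_Icc.preimage measurable_fst).inter
          ((MeasurableSet.univ_pi fun _ => measurableSet_Icc).preimage measurable_snd)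
    have hint : Integrable (fun z : ℝ × (Fin q → ℝ) =>
        ((c + (z.1 + ∑ j, z.2 j)) ^ (q + 1 + 1))⁻¹) (muI.prod ν) := by
      refine Integrable.mono' (integrable_const ((c ^ (q + 1 + 1))⁻¹))
        hmeas.aestronglyMeasurable ?_
      filter_upwards [hae] with z hz
      have hsum : 0 ≤ ∑ j, z.2 j := Finset.sum_nonneg fun j _ => by
        have := (hz.2 j (Set.mem_univ j)).1; linarith
      have h1 : (1 : ℝ) ≤ z.1 := hz.1.1
      have hbase : c ≤ c + (z.1 + ∑ j, z.2 j) := by linarith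
      rw [Real.norm_eq_abs, abs_of_nonneg (by positivity)]
      exact inv_anti₀ (by positivity) (pow_le_pow_left₀ hc.le hbase _)
    rw [MeasureTheory.integral_prod_symm _ hint]
    have hstep : ∀ᵐ y ∂ν, (∫ x, ((c + (x + ∑ j, y j)) ^ (q + 1 + 1))⁻¹ ∂muI) =
        ((((c + 1) + ∑ j, y j) ^ (q + 1))⁻¹ - (((c + 2) + ∑ j, y j) ^ (q + 1))⁻¹) / (q + 1) := by
      filter_upwards [haey] with y hy
      have hsum : 0 ≤ ∑ j, y j := Finset.sum_nonneg fun j _ => by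
        have := (hy j (Set.mem_univ j)).1; linarith
      have hd : 0 < c + ∑ j, y j := by linarith
      have h := inner_int q (c + ∑ j, y j) hd
      have hrw : ∀ x : ℝ, (c + (x + ∑ j, y j)) = x + (c + ∑ j, y j) := fun x => by ring
      simp_rw [hrw]
      rw [h]
      ring_nf
    rw [integral_congr_ae hstep]
    have hA := integrable_aux q (q + 1) (c + 1) (by linarith)
    have hB := integrable_aux q (q + 1) (c + 2) (by linarith)
    have hArw : (fun y : Fin q → ℝ => (((c + 1) + ∑ j, y j) ^ (q + 1))⁻¹) =
        fun y : Fin q → ℝ => (((c + 1) + ∑ j, y j) ^ (q + 1))⁻¹ := rfl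
    simp_rw [div_eq_mul_inv]
    rw [integral_mul_const, integral_sub hA hB, ih (c + 1) (by linarith), ih (c + 2) (by linarith)]
    -- final algebra
    have hP : ∀ j : ℕ, (0:ℝ) < c + (q + 1) + j := fun j => by positivity
    have e1 : ∏ j ∈ Finset.range (q + 1), ((c + 1) + (q:ℝ) + j) =
        ∏ j ∈ Finset.range (q + 1), (c + ((q:ℝ) + 1) + j) := by
      refine Finset.prod_congr rfl fun j _ => by ring
    have e2 : ∏ j ∈ Finset.range (q + 1), ((c + 2) + (q:ℝ) + j) =
        ∏ j ∈ Finset.range (q + 1), (c + ((q:ℝ) + 1) + (j + 1)) := by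
      refine Finset.prod_congr rfl fun j _ => by push_cast; ring
    rw [e1, e2]
    have hfull : ∏ j ∈ Finset.range (q + 1 + 1), (c + ((q:ℝ) + 1) + j) =
        (∏ j ∈ Finset.range (q + 1), (c + ((q:ℝ) + 1) + j)) * (c + ((q:ℝ) + 1) + (q + 1)) := by
      rw [Finset.prod_range_succ]; push_cast; ring_nf
    have hfull' : ∏ j ∈ Finset.range (q + 1 + 1), (c + ((q:ℝ) + 1) + j) =
        (∏ j ∈ Finset.range (q + 1), (c + ((q:ℝ) + 1) + (j + 1))) * (c + ((q:ℝ) + 1) + 0) := by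
      rw [Finset.prod_range_succ' (fun j : ℕ => c + ((q:ℝ) + 1) + j) (q + 1)]
      rw [show ((0:ℕ):ℝ) = 0 from Nat.cast_zero]
      congr 1
      refine Finset.prod_congr rfl fun j _ => by push_cast; ring
    have hposA : (0:ℝ) < ∏ j ∈ Finset.range (q + 1), (c + ((q:ℝ) + 1) + j) :=
      Finset.prod_pos fun j _ => by positivity
    have hposB : (0:ℝ) < ∏ j ∈ Finset.range (q + 1), (c + ((q:ℝ) + 1) + (j + 1)) :=
      Finset.prod_pos fun j _ => by positivity
    have hcast : ∏ j ∈ Finset.range (q + 1 + 1), (c + ((q + 1 : ℕ):ℝ) + j) =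
        ∏ j ∈ Finset.range (q + 1 + 1), (c + ((q:ℝ) + 1) + j) := by
      refine Finset.prod_congr rfl fun j _ => by push_cast; ring
    rw [hcast, hfull]
    set A := ∏ j ∈ Finset.range (q + 1), (c + ((q:ℝ) + 1) + j) with hA'
    set B := ∏ j ∈ Finset.range (q + 1), (c + ((q:ℝ) + 1) + (j + 1)) with hB'
    have hrel : A * (c + ((q:ℝ) + 1) + (q + 1)) = B * (c + ((q:ℝ) + 1) + 0) := by
      rw [← hfull, ← hfull']
    have h1 : (0:ℝ) < c + ((q:ℝ) + 1) + (q + 1) := by positivity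
    have h2 : (0:ℝ) < c + ((q:ℝ) + 1) + 0 := by positivity
    have hq1 : ((q:ℝ) + 1 + 1) ≠ 0 := by positivity
    push_cast
    field_simp
    nlinarith [hrel, hposA, hposB]

/-- The iterated integral `α_q = ∫_1^2 ⋯ ∫_1^2 (1 + s_1 + ⋯ + s_q)^{-(q+1)} ds` over the
cube `[1,2]^q` equals `q!/(2q+1)!`. -/
theorem alpha_q_eq_factorial_ratio (q : ℕ) (hq : 1 ≤ q) :
    ∫ s in (Set.univ.pi fun _ : Fin q => Set.Icc (1 : ℝ) 2),
        ((1 + ∑ i, s i) ^ (q + 1))⁻¹ =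
      (Nat.factorial q : ℝ) / (Nat.factorial (2 * q + 1)) := by
  rw [← pi_restrict_Icc q, key q 1 one_pos]
  have hn := prod_shift q (q + 1)
  have hR : (q.factorial : ℝ) * ∏ j ∈ Finset.range (q + 1), ((q : ℝ) + 1 + j) =
      ((2 * q + 1).factorial : ℝ) := by
    have h2 : q + (q + 1) = 2 * q + 1 := by omega
    rw [← h2]
    exact_mod_cast hn
  have e1 : ∏ j ∈ Finset.range (q + 1), (1 + (q : ℝ) + j) =
      ∏ j ∈ Finset.range (q + 1), ((q : ℝ) + 1 + j) :=
    Finset.prod_congr rfl fun j _ => by ring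
  rw [e1]
  have hprodpos : (0:ℝ) < ∏ j ∈ Finset.range (q + 1), ((q : ℝ) + 1 + j) :=
    Finset.prod_pos fun j _ => by positivity
  have hqf : (q.factorial : ℝ) ≠ 0 := by positivity
  have h2qf : ((2 * q + 1).factorial : ℝ) ≠ 0 := by positivity
  field_simp
  nlinarith [hR]
end

section
/- Define H(F)(η, x_0,…,x_{k-1}) := Σ_{i=0}^{k-1} (-1)^i F(η, x_0,…,x_i, x_i,…,x_{k-1}) (doubling the i-th entry). Then with ε the γ-extended Alexander–Spanier differential, I and P as above, one has the homotopy identity ε ∘ H + H ∘ ε = I ∘ P − id on functions F : Γ × M^{k+1} → ℂ satisfying the finite-support condition. -/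
/-- The γ-extended Alexander–Spanier differential. -/
noncomputable def extAS {Γ M : Type*} [Group Γ] [MulAction Γ M] (χ : M → ℂ) {n : ℕ}
    (f : Γ → (Fin (n + 1) → M) → ℂ) : Γ → (Fin (n + 2) → M) → ℂ :=
  fun η xs =>
    (∑ᶠ h : Γ, f (η * h) fun i => xs i.succ) * χ (η⁻¹ • xs 0) +
      ∑ i : Fin (n + 1), (-1 : ℂ) ^ ((i : ℕ) + 1) * f η (xs ∘ (i.succ).succAbove)

/-- `P(F)(x_0,…,x_k) = Σ_{h∈Γ} F(h, x_0,…,x_k)`. -/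
noncomputable def ASP {Γ M : Type*} {n : ℕ}
    (F : Γ → (Fin (n + 1) → M) → ℂ) : (Fin (n + 1) → M) → ℂ :=
  fun xs => ∑ᶠ h : Γ, F h xs

/-- `I(f)(η, x_0,…,x_k) = f(x_0,…,x_k) · χ(η⁻¹ x_0)`. -/
noncomputable def ASI {Γ M : Type*} [Group Γ] [MulAction Γ M] (χ : M → ℂ) {n : ℕ}
    (f : (Fin (n + 1) → M) → ℂ) : Γ → (Fin (n + 1) → M) → ℂ :=
  fun η xs => f xs * χ (η⁻¹ • xs 0)

/-- The homotopy operator `H(F)(η, x_0,…,x_{k-1}) = Σ_i (-1)^i F(η, x_0,…,x_i,x_i,…,x_{k-1})`,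
doubling the `i`-th entry. -/
noncomputable def ASH {Γ M : Type*} {n : ℕ}
    (F : Γ → (Fin (n + 2) → M) → ℂ) : Γ → (Fin (n + 1) → M) → ℂ :=
  fun η xs => ∑ i : Fin (n + 1), (-1 : ℂ) ^ (i : ℕ) *
    F η (fun j =>
      if h : (j : ℕ) ≤ (i : ℕ) then xs ⟨j, lt_of_le_of_lt h i.isLt⟩
      else xs ⟨(j : ℕ) - 1, by have := j.isLt; omega⟩)

open Finset in
lemma sum_cancel_aux (k : ℕ) (a b : ℕ → ℕ → ℂ) (c : ℂ)
    (hb : ∀ i < k+2, ∀ j < k+2, b i j =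
      if j+1 = i then c else if j = i then -c
      else if j+1 < i then -a (i-1) j else -a i (j-1)) :
    (∑ i ∈ range (k+1), ∑ j ∈ range (k+1), a i j)
      + (∑ i ∈ range (k+2), ∑ j ∈ range (k+2), b i j) = -c := by
  have hb' : ∀ i ∈ range (k+2), ∀ j ∈ range (k+2), b i j =
      (if j+1 = i then c else 0) + (if j = i then -c else 0)
      + (if j+1 < i then -a (i-1) j else 0) + (if i < j then -a i (j-1) else 0) := by
    intro i hi j hj
    rw [hb i (mem_range.1 hi) j (mem_range.1 hj)]
    split_ifs <;> first | omega | ring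
  have hsplit : (∑ i ∈ range (k+2), ∑ j ∈ range (k+2), b i j)
      = (∑ i ∈ range (k+2), ∑ j ∈ range (k+2), (if j+1 = i then c else 0))
        + (∑ i ∈ range (k+2), ∑ j ∈ range (k+2), (if j = i then -c else 0))
        + (∑ i ∈ range (k+2), ∑ j ∈ range (k+2), (if j+1 < i then -a (i-1) j else 0))
        + (∑ i ∈ range (k+2), ∑ j ∈ range (k+2), (if i < j then -a i (j-1) else 0)) := by
    rw [← sum_add_distrib, ← sum_add_distrib, ← sum_add_distrib]
    refine sum_congr rfl fun i hi => ?_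
    rw [← sum_add_distrib, ← sum_add_distrib, ← sum_add_distrib]
    exact sum_congr rfl fun j hj => hb' i hi j hj
  have e1 : (∑ i ∈ range (k+2), ∑ j ∈ range (k+2), (if j+1 = i then c else 0))
      = (k+1 : ℂ) * c := by
    rw [Finset.sum_comm]
    have h1 : ∀ j ∈ range (k+2), (∑ i ∈ range (k+2), (if j+1 = i then c else 0))
        = if j+1 < k+2 then c else 0 := by
      intro j hj
      rw [Finset.sum_ite_eq (range (k+2)) (j+1) (fun _ => c)]
      simp [Finset.mem_range]
    rw [sum_congr rfl h1, Finset.sum_range_succ, if_neg (by omega), add_zero]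
    rw [sum_congr rfl (fun j hj => if_pos (by have := mem_range.1 hj; omega)),
      Finset.sum_const, Finset.card_range, nsmul_eq_mul]
    push_cast; ring
  have e2 : (∑ i ∈ range (k+2), ∑ j ∈ range (k+2), (if j = i then -c else 0))
      = -((k+2 : ℂ) * c) := by
    have h1 : ∀ i ∈ range (k+2), (∑ j ∈ range (k+2), (if j = i then -c else 0)) = -c := by
      intro i hi
      rw [Finset.sum_ite_eq' (range (k+2)) i (fun _ => -c), if_pos hi]
    rw [sum_congr rfl h1, Finset.sum_const, Finset.card_range, nsmul_eq_mul]
    push_cast; ring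
  have e3 : (∑ i ∈ range (k+2), ∑ j ∈ range (k+2), (if j+1 < i then -a (i-1) j else 0))
      = ∑ i ∈ range (k+1), ∑ j ∈ range (k+1), (if j < i then -a i j else 0) := by
    rw [Finset.sum_range_succ']
    have h0 : (∑ j ∈ range (k+2), (if j+1 < 0 then -a (0-1) j else 0)) = 0 := by simp
    rw [h0, add_zero]
    refine sum_congr rfl fun i hi => ?_
    rw [Finset.sum_range_succ, if_neg (by have := mem_range.1 hi; omega), add_zero]
    refine sum_congr rfl fun j hj => ?_
    simp only [Nat.add_sub_cancel]
    split_ifs <;> first | rfl | omega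
  have e4 : (∑ i ∈ range (k+2), ∑ j ∈ range (k+2), (if i < j then -a i (j-1) else 0))
      = ∑ i ∈ range (k+1), ∑ j ∈ range (k+1), (if i ≤ j then -a i j else 0) := by
    rw [Finset.sum_range_succ]
    have h0 : (∑ j ∈ range (k+2), (if k+1 < j then -a (k+1) (j-1) else 0)) = 0 := by
      refine Finset.sum_eq_zero fun j hj => ?_
      rw [if_neg]; have := mem_range.1 hj; omega
    rw [h0, add_zero]
    refine sum_congr rfl fun i hi => ?_
    rw [Finset.sum_range_succ']
    rw [if_neg (by omega), add_zero]
    refine sum_congr rfl fun j hj => ?_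
    simp only [Nat.add_sub_cancel]
    split_ifs <;> first | rfl | omega
  have e5 : (∑ i ∈ range (k+1), ∑ j ∈ range (k+1), (if j < i then -a i j else 0))
      + (∑ i ∈ range (k+1), ∑ j ∈ range (k+1), (if i ≤ j then -a i j else 0))
      = -(∑ i ∈ range (k+1), ∑ j ∈ range (k+1), a i j) := by
    rw [← sum_add_distrib, ← Finset.sum_neg_distrib]
    refine sum_congr rfl fun i _ => ?_
    rw [← sum_add_distrib, ← Finset.sum_neg_distrib]
    refine sum_congr rfl fun j _ => ?_
    split_ifs <;> first | omega | ring
  rw [hsplit, e1, e2, e3, e4]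
  linear_combination e5

open Finset in
lemma chi_algebra_aux (n : ℕ) (S P : ℕ → ℂ) (χ0 : ℂ) (h0 : ∀ i < n, P (i+1) = S i) :
    (∑ i ∈ range n, (-1:ℂ)^i * S i) * χ0 + (∑ i ∈ range (n+1), (-1:ℂ)^i * P i * χ0)
      = P 0 * χ0 := by
  rw [Finset.sum_range_succ' (fun i => (-1:ℂ)^i * P i * χ0) n, Finset.sum_mul,
    pow_zero, one_mul]
  have h1 : ∀ i ∈ range n, (-1:ℂ)^(i+1) * P (i+1) * χ0 = -((-1)^i * S i * χ0) := by
    intro i hi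
    rw [h0 i (mem_range.1 hi), pow_succ]
    ring
  rw [Finset.sum_congr rfl h1, Finset.sum_neg_distrib]
  ring

def sigmaN (i l : ℕ) : ℕ := if l ≤ i then l else l - 1
def deltaN (j l : ℕ) : ℕ := if l < j then l else l + 1

noncomputable def canonF {M : Type*} (k : ℕ) (xs : Fin (k+2) → M) (m : ℕ) (g : ℕ → ℕ) :
    Fin m → M :=
  fun l => xs ⟨min (g l.val) (k+1), Nat.lt_succ_of_le (min_le_right _ _)⟩

lemma canonF_congr {M : Type*} (k : ℕ) (xs : Fin (k+2) → M) (m : ℕ) {g g' : ℕ → ℕ}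
    (h : ∀ l < m, g l = g' l) : canonF k xs m g = canonF k xs m g' :=
  funext fun l => by simp only [canonF, h l.val l.isLt]

lemma canonF_id {M : Type*} (k : ℕ) (xs : Fin (k+2) → M) {g : ℕ → ℕ}
    (h : ∀ l < k+2, g l = l) : canonF k xs (k+2) g = xs :=
  funext fun l => by
    simp only [canonF, h l.val l.isLt]
    congr 1
    exact Fin.ext (by simp [Nat.min_eq_left (Nat.lt_succ_iff.1 l.isLt)])

lemma succAbove_val {n : ℕ} (p : Fin (n+1)) (m : Fin n) :
    ((p.succAbove m : Fin (n+1)) : ℕ) = if (m:ℕ) < (p:ℕ) then (m:ℕ) else (m:ℕ)+1 := by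
  rw [Fin.succAbove, apply_ite Fin.val]
  simp [Fin.lt_def]

lemma ASH_canon {Γ M : Type*} (k : ℕ) (F : Γ → (Fin (k+2) → M) → ℂ)
    (xs : Fin (k+2) → M) (g : Γ) (gy : ℕ → ℕ) :
    ASH F g (canonF k xs (k+1) gy)
      = ∑ i ∈ Finset.range (k+1), (-1:ℂ)^i *
          F g (canonF k xs (k+2) (fun l => gy (sigmaN i l))) := by
  simp only [ASH]
  rw [← Fin.sum_univ_eq_sum_range
    (fun i : ℕ => (-1:ℂ)^i * F g (canonF k xs (k+2) (fun l => gy (sigmaN i l)))) (k+1)]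
  refine Finset.sum_congr rfl fun i _ => ?_
  congr 1
  congr 1
  funext l
  simp only [canonF, sigmaN]
  split_ifs <;> rfl

lemma extAS_canon {Γ M : Type*} [Group Γ] [MulAction Γ M] (χ : M → ℂ) (k : ℕ)
    (F : Γ → (Fin (k+2) → M) → ℂ) (xs : Fin (k+2) → M) (g : Γ) (gz : ℕ → ℕ) :
    extAS χ F g (canonF k xs (k+3) gz)
      = (∑ᶠ h : Γ, F (g * h) (canonF k xs (k+2) (fun l => gz (l+1))))
          * χ (g⁻¹ • canonF k xs (k+3) gz 0)
        + ∑ j ∈ Finset.range (k+2), (-1:ℂ)^(j+1) *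
            F g (canonF k xs (k+2) (fun l => gz (deltaN (j+1) l))) := by
  have h1 : (fun i : Fin (k+2) => canonF k xs (k+3) gz i.succ)
      = canonF k xs (k+2) (fun l => gz (l+1)) := by
    funext l
    simp only [canonF, Fin.val_succ]
  have h2 : ∀ j : Fin (k+2), (canonF k xs (k+3) gz) ∘ (Fin.succ j).succAbove
      = canonF k xs (k+2) (fun l => gz (deltaN ((j:ℕ)+1) l)) := by
    intro j
    funext l
    have hv : ((Fin.succ j).succAbove l).val = deltaN ((j:ℕ)+1) l.val := by
      rw [succAbove_val]
      simp [deltaN, Fin.val_succ]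
    simp only [Function.comp_apply, canonF, hv]
  simp only [extAS, h1]
  congr 1
  rw [← Fin.sum_univ_eq_sum_range
      (fun j : ℕ => (-1:ℂ)^(j+1) * F g (canonF k xs (k+2) (fun l => gz (deltaN (j+1) l)))) (k+2)]
  refine Finset.sum_congr rfl fun j _ => ?_
  rw [h2 j]

/-- The homotopy identity `ε ∘ H + H ∘ ε = I ∘ P − id` on extended Alexander–Spanier
cochains with the finite-support condition, for a cut-off function `χ`. -/
theorem homotopy_identity (Γ M : Type*) [Group Γ] [MulAction Γ M] (χ : M → ℂ)
    (hχfin : ∀ x : M, (Function.support fun h : Γ => χ (h⁻¹ • x)).Finite)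
    (hχsum : ∀ x : M, ∑ᶠ h : Γ, χ (h⁻¹ • x) = 1)
    (k : ℕ) (F : Γ → (Fin (k + 2) → M) → ℂ)
    (hF : ∀ xs : Fin (k + 2) → M, (Function.support fun g : Γ => F g xs).Finite) :
    ∀ (η : Γ) (xs : Fin (k + 2) → M),
      extAS χ (ASH F) η xs + ASH (extAS χ F) η xs
        = ASI χ (ASP (Γ := Γ) F) η xs - F η xs := by
  intro η xs
  have hfin : ∀ ys : Fin (k+2) → M, (Function.support fun h : Γ => F (η*h) ys).Finite := by
    intro ys
    have hsub : (Function.support fun h : Γ => F (η*h) ys)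
        ⊆ (fun h => η*h) ⁻¹' (Function.support fun g => F g ys) := fun x hx => hx
    exact Set.Finite.subset
      (Set.Finite.preimage (Set.injOn_of_injective (mul_right_injective η)) (hF ys)) hsub
  have hfin' : ∀ (c : ℂ) (ys : Fin (k+2) → M),
      (Function.support fun h : Γ => c * F (η*h) ys).Finite := by
    intro c ys
    refine (hfin ys).subset ?_
    intro x hx
    simp only [Function.mem_support] at hx ⊢
    intro h0
    exact hx (by rw [h0, mul_zero])
  -- L1 : unfold the outer extAS
  have L1 : extAS χ (ASH F) η xs =
      (∑ᶠ h : Γ, ASH F (η*h) (canonF k xs (k+1) (deltaN 0))) * χ (η⁻¹ • xs 0)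
      + ∑ j ∈ Finset.range (k+1), (-1:ℂ)^(j+1) * ASH F η (canonF k xs (k+1) (deltaN (j+1))) := by
    have hδ0 : (fun i : Fin (k+1) => xs i.succ) = canonF k xs (k+1) (deltaN 0) := by
      funext l
      simp only [canonF]
      congr 1
      refine Fin.ext ?_
      simp only [deltaN, Fin.val_succ]
      have := l.isLt
      split_ifs <;> omega
    have hface : ∀ j : Fin (k+1), xs ∘ (Fin.succ j).succAbove
        = canonF k xs (k+1) (deltaN ((j:ℕ)+1)) := by
      intro j
      funext l
      simp only [Function.comp_apply, canonF]
      congr 1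
      refine Fin.ext ?_
      rw [succAbove_val]
      simp only [deltaN, Fin.val_succ]
      have h1 := l.isLt
      have h2 := j.isLt
      split_ifs <;> omega
    simp only [extAS, hδ0]
    congr 1
    rw [← Fin.sum_univ_eq_sum_range
      (fun j : ℕ => (-1:ℂ)^(j+1) * ASH F η (canonF k xs (k+1) (deltaN (j+1)))) (k+1)]
    refine Finset.sum_congr rfl fun j _ => ?_
    rw [hface j]
  -- L2 : unfold the outer ASH
  have L2 : ASH (extAS χ F) η xs
      = ∑ i ∈ Finset.range (k+2), (-1:ℂ)^i * extAS χ F η (canonF k xs (k+3) (sigmaN i)) := by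
    simp only [ASH]
    rw [← Fin.sum_univ_eq_sum_range
      (fun i : ℕ => (-1:ℂ)^i * extAS χ F η (canonF k xs (k+3) (sigmaN i))) (k+2)]
    refine Finset.sum_congr rfl fun i _ => ?_
    congr 1
    congr 1
    funext l
    simp only [canonF, sigmaN]
    have hi := i.isLt
    have hl := l.isLt
    split_ifs <;> exact congrArg xs (Fin.ext (by simp; omega))
  -- T1 : expand ASH under the finsum
  have T1 : (∑ᶠ h : Γ, ASH F (η*h) (canonF k xs (k+1) (deltaN 0)))
      = ∑ i ∈ Finset.range (k+1), (-1:ℂ)^i *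
          ∑ᶠ h : Γ, F (η*h) (canonF k xs (k+2) (fun l => deltaN 0 (sigmaN i l))) := by
    rw [finsum_congr (fun h => ASH_canon k F xs (η*h) (deltaN 0))]
    rw [finsum_sum_comm _ _ (fun i _ => hfin' _ _)]
    exact Finset.sum_congr rfl fun i _ => (mul_finsum _ _).symm
  -- T2 : expand ASH in the face sum, swap
  have T2 : ∑ j ∈ Finset.range (k+1), (-1:ℂ)^(j+1) * ASH F η (canonF k xs (k+1) (deltaN (j+1)))
      = ∑ i ∈ Finset.range (k+1), ∑ j ∈ Finset.range (k+1),
          ((-1:ℂ)^(i+j+1) * F η (canonF k xs (k+2) (fun l => deltaN (j+1) (sigmaN i l)))) := by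
    rw [Finset.sum_comm]
    refine Finset.sum_congr rfl fun j _ => ?_
    rw [ASH_canon, Finset.mul_sum]
    refine Finset.sum_congr rfl fun i _ => ?_
    rw [show i+j+1 = i+(j+1) from by omega, pow_add]
    ring
  have hx0 : ∀ i : ℕ, canonF k xs (k+3) (sigmaN i) 0 = xs 0 := by
    intro i
    simp only [canonF]
    exact congrArg xs (Fin.ext (by simp [sigmaN]))
  -- L2' : expand the inner extAS
  have L2' : ∑ i ∈ Finset.range (k+2), (-1:ℂ)^i * extAS χ F η (canonF k xs (k+3) (sigmaN i))
      = (∑ i ∈ Finset.range (k+2), (-1:ℂ)^i *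
            (∑ᶠ h : Γ, F (η*h) (canonF k xs (k+2) (fun l => sigmaN i (l+1)))) * χ (η⁻¹ • xs 0))
        + ∑ i ∈ Finset.range (k+2), ∑ j ∈ Finset.range (k+2),
            ((-1:ℂ)^(i+j+1) * F η (canonF k xs (k+2) (fun l => sigmaN i (deltaN (j+1) l)))) := by
    rw [← Finset.sum_add_distrib]
    refine Finset.sum_congr rfl fun i _ => ?_
    rw [extAS_canon χ k F xs η (sigmaN i), hx0 i, mul_add]
    congr 1
    · ring
    · rw [Finset.mul_sum]
      refine Finset.sum_congr rfl fun j _ => ?_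
      rw [show i+j+1 = i+(j+1) from by omega, pow_add]
      ring
  -- the χ-part
  have Hχ := chi_algebra_aux (k+1)
    (fun i => ∑ᶠ h : Γ, F (η*h) (canonF k xs (k+2) (fun l => deltaN 0 (sigmaN i l))))
    (fun i => ∑ᶠ h : Γ, F (η*h) (canonF k xs (k+2) (fun l => sigmaN i (l+1))))
    (χ (η⁻¹ • xs 0))
    (by
      intro i _
      refine finsum_congr fun h => ?_
      refine congrArg (F (η*h)) (canonF_congr k xs (k+2) fun l _ => ?_)
      simp only [sigmaN, deltaN]
      split_ifs <;> omega)
  -- identify P 0 with ASI/ASP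
  have hASI : ASI χ (ASP (Γ := Γ) F) η xs
      = (∑ᶠ h : Γ, F (η*h) (canonF k xs (k+2) (fun l => sigmaN 0 (l+1)))) * χ (η⁻¹ • xs 0) := by
    have hc : canonF k xs (k+2) (fun l => sigmaN 0 (l+1)) = xs :=
      canonF_id k xs (fun l _ => by simp only [sigmaN]; split_ifs <;> omega)
    have hre : (∑ᶠ h : Γ, F (η * h) xs) = ∑ᶠ h : Γ, F h xs := by
      have := finsum_comp_equiv (Equiv.mulLeft η) (f := fun g => F g xs)
      simpa using this
    rw [hc, hre]
    simp only [ASI, ASP]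
  -- the main cancellation
  have Hm := sum_cancel_aux k
    (fun i j => (-1:ℂ)^(i+j+1) * F η (canonF k xs (k+2) (fun l => deltaN (j+1) (sigmaN i l))))
    (fun i j => (-1:ℂ)^(i+j+1) * F η (canonF k xs (k+2) (fun l => sigmaN i (deltaN (j+1) l))))
    (F η xs)
    (by
      intro i hi j hj
      by_cases h1 : j+1 = i
      · rw [if_pos h1]
        have hc : canonF k xs (k+2) (fun l => sigmaN i (deltaN (j+1) l)) = xs :=
          canonF_id k xs (fun l _ => by
            simp only [sigmaN, deltaN]
            split_ifs <;> omega)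
        rw [hc, Even.neg_one_pow ⟨j+1, by omega⟩, one_mul]
      · rw [if_neg h1]
        by_cases h2 : j = i
        · rw [if_pos h2]
          have hc : canonF k xs (k+2) (fun l => sigmaN i (deltaN (j+1) l)) = xs :=
            canonF_id k xs (fun l _ => by
              simp only [sigmaN, deltaN]
              split_ifs <;> omega)
          rw [hc, Odd.neg_one_pow ⟨i, by omega⟩]
          ring
        · rw [if_neg h2]
          by_cases h3 : j+1 < i
          · rw [if_pos h3]
            obtain ⟨i', rfl⟩ : ∃ i', i = i'+1 := ⟨i-1, by omega⟩
            have hc : canonF k xs (k+2) (fun l => sigmaN (i'+1) (deltaN (j+1) l))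
                = canonF k xs (k+2) (fun l => deltaN (j+1) (sigmaN i' l)) :=
              canonF_congr k xs (k+2) (fun l _ => by
                simp only [sigmaN, deltaN]
                split_ifs <;> omega)
            simp only [Nat.add_sub_cancel]
            rw [hc]
            rw [show i'+1+j+1 = (i'+j+1)+1 from by omega, pow_succ]
            ring
          · rw [if_neg h3]
            have hij : i < j := by omega
            obtain ⟨j', rfl⟩ : ∃ j', j = j'+1 := ⟨j-1, by omega⟩
            have hc : canonF k xs (k+2) (fun l => sigmaN i (deltaN (j'+1+1) l))
                = canonF k xs (k+2) (fun l => deltaN (j'+1) (sigmaN i l)) :=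
              canonF_congr k xs (k+2) (fun l _ => by
                simp only [sigmaN, deltaN]
                split_ifs <;> omega)
            simp only [Nat.add_sub_cancel]
            rw [hc]
            rw [show i+(j'+1)+1 = (i+j'+1)+1 from by omega, pow_succ]
            ring)
  have Hχ' : (∑ i ∈ Finset.range (k+1), (-1:ℂ)^i *
        ∑ᶠ (h : Γ), F (η * h) (canonF k xs (k + 2) fun l => deltaN 0 (sigmaN i l))) *
          χ (η⁻¹ • xs 0) +
      ∑ i ∈ Finset.range (k+2),
        ((-1:ℂ)^i * ∑ᶠ (h : Γ), F (η * h) (canonF k xs (k + 2) fun l => sigmaN i (l + 1))) *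
          χ (η⁻¹ • xs 0) =
    (∑ᶠ (h : Γ), F (η * h) (canonF k xs (k + 2) fun l => sigmaN 0 (l + 1))) * χ (η⁻¹ • xs 0) := Hχ
  rw [L1, L2, T1, T2, L2']
  linear_combination Hχ' + Hm - hASI
end
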